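/- arXiv:1907.03845 — 2 statements merged into one kernel-verified Lean document; each statement's English description precedes it below -/
import Mathlib

section
/- If {d_n}_{n \geq 0} is a higher derivation on an algebra A over a field of characteristic zero with d_0 = I, then there exists a sequence {\delta_n}_{n \geq 1} of derivations on A such that (n+1) d_{n+1} = \sum_{k=0}^{n} \delta_{k+1} \circ d_{n-k} for every non-negative integer n. -/
set_option linter.unusedSectionVars false
open Finset
section
variable {K A : Type*} [Field K] [CharZero K] [Ring A] [Algebra K A]

noncomputable def hdDelta (d : ℕ → Module.End K A) : ℕ → Module.End K A
  | 0 => 0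
  | (n+1) => ((n : K) + 1) • d (n+1)
      - ∑ k ∈ (range n).attach, hdDelta d (k.1+1) * d (n - k.1)
  decreasing_by have := mem_range.mp k.2; omega

lemma hdDelta_succ (d : ℕ → Module.End K A) (n : ℕ) :
    hdDelta d (n+1) = ((n : K) + 1) • d (n+1)
      - ∑ k ∈ range n, hdDelta d (k+1) * d (n - k) := by
  rw [hdDelta, Finset.sum_attach (range n) (fun k => hdDelta d (k+1) * d (n - k))]

lemma hdF (d : ℕ → Module.End K A) (hd0 : d 0 = 1) (n : ℕ) :
    ∑ k ∈ range (n+1), hdDelta d (k+1) * d (n - k) = ((n : K) + 1) • d (n+1) := by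
  rw [sum_range_succ, hdDelta_succ, Nat.sub_self, hd0, mul_one]
  abel

lemma tri_comm {M : Type*} [AddCommMonoid M] (n : ℕ) (f : ℕ → ℕ → M) :
    ∑ k ∈ range n, ∑ i ∈ range (n - k), f k i
      = ∑ i ∈ range n, ∑ k ∈ range (n - i), f k i := by
  have key : ∀ g : ℕ → ℕ → M, ∀ k, ∑ i ∈ range (n - k), g k i
      = ∑ i ∈ range n, if k + i < n then g k i else 0 := by
    intro g k
    rw [← Finset.sum_filter]
    apply Finset.sum_congr _ (fun _ _ => rfl)
    ext i; simp only [mem_range, mem_filter]; omega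
  calc ∑ k ∈ range n, ∑ i ∈ range (n - k), f k i
      = ∑ k ∈ range n, ∑ i ∈ range n, if k + i < n then f k i else 0 :=
        Finset.sum_congr rfl fun k _ => key f k
    _ = ∑ i ∈ range n, ∑ k ∈ range n, if k + i < n then f k i else 0 :=
        Finset.sum_comm
    _ = ∑ i ∈ range n, ∑ k ∈ range (n - i), f k i := by
        refine Finset.sum_congr rfl fun i _ => ?_
        rw [key (fun i k => f k i) i]
        exact Finset.sum_congr rfl fun k _ => by rw [Nat.add_comm]

lemma hdDelta_leibniz (d : ℕ → Module.End K A) (hd0 : d 0 = 1)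
    (hhd : ∀ (n : ℕ) (a b : A),
      d n (a * b) = ∑ k ∈ range (n + 1), d (n - k) a * d k b) (n : ℕ) :
    ∀ a b : A, hdDelta d n (a*b) = hdDelta d n a * b + a * hdDelta d n b := by
  induction n using Nat.strong_induction_on with
  | _ n IH =>
  match n with
  | 0 => intro a b; simp [hdDelta]
  | (m+1) =>
    intro a b
    set δ := hdDelta d with hδ
    have h0 : ∀ x : A, d 0 x = x := fun x => by rw [hd0]; rfl
    have happ : ∀ x : A, δ (m+1) x
        = ((m:K)+1) • d (m+1) x - ∑ k ∈ range m, δ (k+1) (d (m-k) x) := by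
      intro x
      rw [hδ, hdDelta_succ]
      simp [LinearMap.sub_apply, LinearMap.smul_apply, LinearMap.sum_apply,
        Module.End.mul_apply]
    have Fapp : ∀ (j : ℕ) (x : A),
        ∑ k ∈ range (j+1), δ (k+1) (d (j-k) x) = ((j:K)+1) • d (j+1) x := by
      intro j x
      have h := congrArg (fun f : Module.End K A => f x) (hdF d hd0 j)
      simpa [LinearMap.sum_apply, Module.End.mul_apply] using h
    -- split the sum using the induction hypothesis (Leibniz for lower δ's)
    have hsplit : ∑ k ∈ range m, δ (k+1) (d (m-k) (a*b))
        = (∑ k ∈ range m, ∑ i ∈ range (m+1-k), δ (k+1) (d (m-k-i) a) * d i b)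
          + ∑ k ∈ range m, ∑ i ∈ range (m+1-k), d (m-k-i) a * δ (k+1) (d i b) := by
      rw [← Finset.sum_add_distrib]
      refine Finset.sum_congr rfl fun k hk => ?_
      have hk' : k < m := mem_range.mp hk
      rw [hhd (m-k) a b, show (m-k)+1 = m+1-k by omega, map_sum,
        ← Finset.sum_add_distrib]
      exact Finset.sum_congr rfl fun i _ => IH (k+1) (by omega) _ _
    -- the A-part
    have hSA : ∑ k ∈ range m, ∑ i ∈ range (m+1-k), δ (k+1) (d (m-k-i) a) * d i b
        = (∑ i ∈ range (m+1), (((m-i:ℕ):K)+1) • (d ((m-i)+1) a * d i b))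
          - δ (m+1) a * b := by
      have full := tri_comm (m+1) (fun k i => δ (k+1) (d (m-k-i) a) * d i b)
      rw [sum_range_succ] at full
      have hcorner : ∑ i ∈ range (m+1-m), δ (m+1) (d (m-m-i) a) * d i b
          = δ (m+1) a * b := by
        simp [h0]
      rw [hcorner] at full
      have hrhs : ∑ i ∈ range (m+1), ∑ k ∈ range (m+1-i), δ (k+1) (d (m-k-i) a) * d i b
          = ∑ i ∈ range (m+1), (((m-i:ℕ):K)+1) • (d ((m-i)+1) a * d i b) := by
        refine Finset.sum_congr rfl fun i hi => ?_
        have hi' : i < m+1 := mem_range.mp hi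
        rw [show m+1-i = (m-i)+1 by omega, ← Finset.sum_mul]
        rw [show ∑ k ∈ range ((m-i)+1), δ (k+1) (d (m-k-i) a)
            = ∑ k ∈ range ((m-i)+1), δ (k+1) (d ((m-i)-k) a) from
          Finset.sum_congr rfl fun k _ => by rw [show m-k-i = (m-i)-k by omega]]
        rw [Fapp (m-i) a, smul_mul_assoc]
      rw [hrhs] at full
      exact eq_sub_of_add_eq full
    -- the B-part
    have hSB : ∑ k ∈ range m, ∑ i ∈ range (m+1-k), d (m-k-i) a * δ (k+1) (d i b)
        = (∑ j ∈ range (m+1), (((m-j:ℕ):K)+1) • (d j a * d ((m-j)+1) b))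
          - a * δ (m+1) b := by
      have hrefl : ∀ k, k < m → ∑ i ∈ range (m+1-k), d (m-k-i) a * δ (k+1) (d i b)
          = ∑ j ∈ range (m+1-k), d j a * δ (k+1) (d (m-k-j) b) := by
        intro k hk
        have h := Finset.sum_range_reflect
          (fun j => d j a * δ (k+1) (d (m-k-j) b)) (m+1-k)
        rw [← h]
        refine Finset.sum_congr rfl fun i hi => ?_
        have hi' : i < m+1-k := mem_range.mp hi
        rw [show m+1-k-1-i = m-k-i by omega, show m-k-(m-k-i) = i by omega]
      rw [Finset.sum_congr rfl fun k hk => hrefl k (mem_range.mp hk)]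
      have full := tri_comm (m+1) (fun k j => d j a * δ (k+1) (d (m-k-j) b))
      rw [sum_range_succ] at full
      have hcorner : ∑ j ∈ range (m+1-m), d j a * δ (m+1) (d (m-m-j) b)
          = a * δ (m+1) b := by
        simp [h0]
      rw [hcorner] at full
      have hrhs : ∑ j ∈ range (m+1), ∑ k ∈ range (m+1-j), d j a * δ (k+1) (d (m-k-j) b)
          = ∑ j ∈ range (m+1), (((m-j:ℕ):K)+1) • (d j a * d ((m-j)+1) b) := by
        refine Finset.sum_congr rfl fun j hj => ?_
        have hj' : j < m+1 := mem_range.mp hj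
        rw [show m+1-j = (m-j)+1 by omega, ← Finset.mul_sum]
        rw [show ∑ k ∈ range ((m-j)+1), δ (k+1) (d (m-k-j) b)
            = ∑ k ∈ range ((m-j)+1), δ (k+1) (d ((m-j)-k) b) from
          Finset.sum_congr rfl fun k _ => by rw [show m-k-j = (m-j)-k by omega]]
        rw [Fapp (m-j) b, mul_smul_comm]
      rw [hrhs] at full
      exact eq_sub_of_add_eq full
    -- the main numerical identity
    have main : ((m:K)+1) • (d (m+1) (a*b))
        = (∑ i ∈ range (m+1), (((m-i:ℕ):K)+1) • (d ((m-i)+1) a * d i b))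
          + ∑ j ∈ range (m+1), (((m-j:ℕ):K)+1) • (d j a * d ((m-j)+1) b) := by
      -- rewrite Y by reflecting
      have hY : ∑ j ∈ range (m+1), (((m-j:ℕ):K)+1) • (d j a * d ((m-j)+1) b)
          = ∑ j ∈ range (m+1), ((j:K)+1) • (d (m+1-(j+1)) a * d (j+1) b) := by
        have h := Finset.sum_range_reflect
          (fun j => ((j:K)+1) • (d (m+1-(j+1)) a * d (j+1) b)) (m+1)
        rw [← h]
        refine Finset.sum_congr rfl fun j hj => ?_
        have hj' : j < m+1 := mem_range.mp hj
        rw [show m+1-1-j = m-j by omega, show m+1-(m-j+1) = j by omega]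
      have hX : ∑ i ∈ range (m+1), (((m-i:ℕ):K)+1) • (d ((m-i)+1) a * d i b)
          = ∑ i ∈ range (m+1), (((m-i:ℕ):K)+1) • (d (m+1-i) a * d i b) := by
        refine Finset.sum_congr rfl fun i hi => ?_
        have hi' : i < m+1 := mem_range.mp hi
        rw [show (m-i)+1 = m+1-i by omega]
      have hshift : ∑ j ∈ range m, ((j:K)+1) • (d (m+1-(j+1)) a * d (j+1) b)
          = ∑ i ∈ range (m+1), (i:K) • (d (m+1-i) a * d i b) := by
        rw [Finset.sum_range_succ' (fun i => (i:K) • (d (m+1-i) a * d i b)) m]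
        push_cast
        simp
      have hpt : ∀ i ∈ range (m+1), ((m:K)+1) • (d (m+1-i) a * d i b)
          = (((m-i:ℕ):K)+1) • (d (m+1-i) a * d i b)
            + (i:K) • (d (m+1-i) a * d i b) := by
        intro i hi
        have hi' : i ≤ m := by have := mem_range.mp hi; omega
        rw [← add_smul, Nat.cast_sub hi']
        ring_nf
      rw [hY, hX, hhd (m+1) a b, Finset.smul_sum,
        Finset.sum_range_succ (fun i => ((m:K)+1) • (d (m+1-i) a * d i b)) (m+1),
        Finset.sum_range_succ (fun j => ((j:K)+1) • (d (m+1-(j+1)) a * d (j+1) b)) m,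
        hshift, Finset.sum_congr rfl hpt, Finset.sum_add_distrib]
      abel
    rw [happ (a*b), hsplit, hSA, hSB, main]
    abel

end

/-- Corollary 2.9 (first half): every higher derivation with `d₀ = I` arises from a
sequence of derivations via the recursion `(n+1) dₙ₊₁ = ∑ₖ δₖ₊₁ ∘ dₙ₋ₖ`. -/
theorem higher_derivation_recursion
    {K A : Type*} [Field K] [CharZero K] [Ring A] [Algebra K A]
    (d : ℕ → Module.End K A)
    (hd0 : d 0 = 1)
    (hhd : ∀ (n : ℕ) (a b : A),
      d n (a * b) = ∑ k ∈ Finset.range (n + 1), d (n - k) a * d k b) :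
    ∃ δ : ℕ → Module.End K A,
      (∀ n, 1 ≤ n → ∀ a b : A, δ n (a * b) = δ n a * b + a * δ n b) ∧
      (∀ n : ℕ,
        ((n : K) + 1) • d (n + 1) = ∑ k ∈ Finset.range (n + 1), δ (k + 1) * d (n - k)) := by
  refine ⟨hdDelta d, fun n _ a b => hdDelta_leibniz d hd0 hhd n a b,
    fun n => (hdF d hd0 n).symm⟩
end

section
/- Given any sequence {\delta_n}_{n \geq 1} of derivations on an algebra A over a field of characteristic zero, the sequence defined by d_0 = I and d_n = \sum_{i=1}^{n} \sum_{r_1 + \cdots + r_i = n, r_j \geq 1} \left( \prod_{j=1}^{i} \frac{1}{r_j + \cdots + r_i} \right) \delta_{r_1} \circ \cdots \circ \delta_{r_i} is a higher derivation on A. -/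
open Finset in
/-- The map `∑_{i=1}^{n} ∑_{r₁+⋯+rᵢ=n, rⱼ≥1} (∏ⱼ 1/(rⱼ+⋯+rᵢ)) δ_{r₁} ∘ ⋯ ∘ δ_{rᵢ}`. -/
noncomputable def explicitHigherTerm {K V : Type*} [Field K] [AddCommGroup V] [Module K V]
    (F : ℕ → Module.End K V) (n : ℕ) : Module.End K V :=
  ∑ i ∈ Finset.Icc 1 n,
    ∑ r ∈ (Finset.Nat.antidiagonalTuple i n).filter (fun r => ∀ j, 0 < r j),
      (∏ j, (((∑ j' ∈ Finset.Ici j, r j') : ℕ) : K)⁻¹) •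
        (List.ofFn (fun j => F (r j))).prod

open Finset

theorem filter_pos_empty {i k : ℕ} (h : k < i) :
    (Finset.Nat.antidiagonalTuple i k).filter (fun r => ∀ j, 0 < r j) = ∅ := by
  rw [Finset.filter_eq_empty_iff]
  intro r hr hpos
  rw [Finset.Nat.mem_antidiagonalTuple] at hr
  have h2 : i ≤ ∑ j, r j := by
    calc (i : ℕ) = ∑ _j : Fin i, 1 := by simp
    _ ≤ ∑ j, r j := Finset.sum_le_sum fun j _ => hpos j
  omega

theorem sum_Ici_succ' {M : Type*} [AddCommMonoid M] {i : ℕ} (f : Fin (i+1) → M) (j : Fin i) :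
    ∑ k ∈ Finset.Ici j.succ, f k = ∑ k ∈ Finset.Ici j, f k.succ := by
  refine Finset.sum_bij' (i := fun (k : Fin (i+1)) (hk : k ∈ Finset.Ici j.succ) => k.pred (by
      rintro rfl; simp only [mem_Ici, Fin.le_def, Fin.val_succ, Fin.val_zero] at hk; omega))
    (j := fun k _ => k.succ) ?_ ?_ ?_ ?_ ?_
  · intro a ha
    rw [mem_Ici] at ha ⊢
    rw [Fin.le_def] at ha ⊢
    simp only [Fin.coe_pred, Fin.val_succ] at ha ⊢
    omega
  · intro a ha
    rw [mem_Ici] at ha ⊢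
    rw [Fin.le_def] at ha ⊢
    simp only [Fin.val_succ] at ha ⊢
    omega
  · intro a ha; simp
  · intro a ha; simp
  · intro a ha; congr 1; simp

theorem peel_comp {M : Type*} [AddCommMonoid M] (i n : ℕ) (f : (Fin (i+1) → ℕ) → M) :
    ∑ r ∈ (Finset.Nat.antidiagonalTuple (i+1) n).filter (fun r => ∀ j, 0 < r j), f r
    = ∑ m ∈ Finset.Icc 1 n, ∑ s ∈ (Finset.Nat.antidiagonalTuple i (n-m)).filter
        (fun s => ∀ j, 0 < s j), f (Fin.cons m s) := by
  rw [Finset.sum_sigma']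
  refine Finset.sum_nbij' (i := fun r => ⟨r 0, Fin.tail r⟩)
    (j := fun p => Fin.cons p.1 p.2) ?_ ?_ ?_ ?_ ?_
  · intro r hr
    simp only [mem_filter, Finset.Nat.mem_antidiagonalTuple] at hr
    obtain ⟨hsum, hpos⟩ := hr
    have h0 : r 0 ≤ n := hsum ▸ Finset.single_le_sum (fun j _ => Nat.zero_le (r j)) (mem_univ 0)
    have hs : ∑ j, r j = r 0 + ∑ j : Fin i, Fin.tail r j := by
      rw [Fin.sum_univ_succ]; rfl
    simp only [mem_sigma, mem_Icc, mem_filter, Finset.Nat.mem_antidiagonalTuple]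
    refine ⟨⟨hpos 0, h0⟩, ?_, fun j => hpos j.succ⟩
    omega
  · intro p hp
    simp only [mem_sigma, mem_Icc, mem_filter, Finset.Nat.mem_antidiagonalTuple] at hp
    obtain ⟨⟨h1, h2⟩, hsum, hpos⟩ := hp
    simp only [mem_filter, Finset.Nat.mem_antidiagonalTuple]
    constructor
    · rw [Fin.sum_univ_succ]
      simp only [Fin.cons_zero, Fin.cons_succ]
      omega
    · intro j
      refine Fin.cases ?_ ?_ j
      · simp only [Fin.cons_zero]; omega
      · intro j'; simpa using hpos j'
  · intro r hr; exact Fin.cons_self_tail r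
  · intro p hp
    refine Sigma.ext ?_ ?_
    · simp
    · simp [Fin.tail_cons]
  · intro r hr; rw [Fin.cons_self_tail]

theorem explicit_sum_eq {K V : Type*} [Field K] [AddCommGroup V] [Module K V]
    (F : ℕ → Module.End K V) {n : ℕ} (hn : 1 ≤ n) :
    explicitHigherTerm F n = ∑ m ∈ Finset.Icc 1 n, (n : K)⁻¹ •
      (F m * (if n - m = 0 then 1 else explicitHigherTerm F (n - m))) := by
  classical
  set T : ℕ → Module.End K V := fun i =>
    ∑ r ∈ (Finset.Nat.antidiagonalTuple i n).filter (fun r => ∀ j, 0 < r j),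
      (∏ j, (((∑ j' ∈ Finset.Ici j, r j') : ℕ) : K)⁻¹) •
        (List.ofFn (fun j => F (r j))).prod with hT
  set U : ℕ → ℕ → Module.End K V := fun i k =>
    ∑ s ∈ (Finset.Nat.antidiagonalTuple i k).filter (fun s => ∀ j, 0 < s j),
      (∏ j, (((∑ j' ∈ Finset.Ici j, s j') : ℕ) : K)⁻¹) •
        (List.ofFn (fun j => F (s j))).prod with hU
  have h1 : explicitHigherTerm F n = ∑ i ∈ range n, T (i+1) := by
    rw [explicitHigherTerm]
    refine Finset.sum_nbij' (i := fun i => i - 1) (j := fun i => i + 1) ?_ ?_ ?_ ?_ ?_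
    · intro a ha; simp only [mem_Icc, mem_range] at *; omega
    · intro a ha; simp only [mem_Icc, mem_range] at *; omega
    · intro a ha; simp only [mem_Icc] at ha; show a - 1 + 1 = a; omega
    · intro a ha; show a + 1 - 1 = a; omega
    · intro a ha
      simp only [mem_Icc] at ha
      have h : a - 1 + 1 = a := by omega
      show T a = T (a - 1 + 1)
      rw [h]
  have h3 : ∀ i, T (i+1) = ∑ m ∈ Finset.Icc 1 n, (n : K)⁻¹ • (F m * U i (n - m)) := by
    intro i
    rw [show T (i+1) = ∑ r ∈ (Finset.Nat.antidiagonalTuple (i+1) n).filter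
        (fun r => ∀ j, 0 < r j),
        (∏ j, (((∑ j' ∈ Finset.Ici j, r j') : ℕ) : K)⁻¹) •
          (List.ofFn (fun j => F (r j))).prod from rfl, peel_comp]
    refine Finset.sum_congr rfl fun m hm => ?_
    simp only [mem_Icc] at hm
    rw [hU]
    simp only
    rw [Finset.mul_sum, Finset.smul_sum]
    refine Finset.sum_congr rfl fun s hs => ?_
    simp only [mem_filter, Finset.Nat.mem_antidiagonalTuple] at hs
    have hIci0 : (Finset.Ici (0 : Fin (i+1))) = Finset.univ := by
      ext x; simp [Fin.zero_le]
    have hc0 : ∑ j' ∈ Finset.Ici (0 : Fin (i+1)), Fin.cons m s j' = n := by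
      rw [hIci0, Fin.sum_univ_succ]
      simp only [Fin.cons_zero, Fin.cons_succ]
      omega
    have hcs : ∀ j : Fin i, ∑ j' ∈ Finset.Ici j.succ, Fin.cons m s j'
        = ∑ j' ∈ Finset.Ici j, s j' := by
      intro j; rw [sum_Ici_succ']; simp [Fin.cons_succ]
    rw [Fin.prod_univ_succ, hc0]
    simp only [hcs]
    rw [List.ofFn_succ]
    simp only [Fin.cons_zero, Fin.cons_succ, List.prod_cons]
    rw [mul_smul_comm, smul_smul]
  have h5 : ∀ m ∈ Finset.Icc 1 n, ∑ i ∈ range n, U i (n - m)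
      = if n - m = 0 then 1 else explicitHigherTerm F (n - m) := by
    intro m hm
    simp only [mem_Icc] at hm
    by_cases hm' : n - m = 0
    · rw [hm', if_pos rfl]
      have hU00 : U 0 0 = 1 := by
        rw [hU]
        simp [Finset.Nat.antidiagonalTuple_zero_zero]
      refine (Finset.sum_eq_single 0 ?_ ?_).trans hU00
      · intro i _ hne
        have hipos : 0 < i := Nat.pos_of_ne_zero hne
        show U i 0 = 0
        rw [hU]
        simp only
        rw [filter_pos_empty hipos, Finset.sum_empty]
      · intro h; exact absurd (Finset.mem_range.2 (by omega)) h
    · rw [if_neg hm']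
      have hk : 0 < n - m := Nat.pos_of_ne_zero hm'
      have hE : explicitHigherTerm F (n - m) = ∑ i ∈ Finset.Icc 1 (n-m), U i (n-m) := rfl
      rw [hE]
      refine (Finset.sum_subset ?_ ?_).symm
      · intro i hi; simp only [mem_Icc, mem_range] at *; omega
      · intro i hi hni
        simp only [mem_Icc, mem_range] at hi hni
        rcases Nat.eq_zero_or_pos i with rfl | hipos
        · rw [hU]
          simp only
          rw [← Nat.succ_pred_eq_of_pos hk, Finset.Nat.antidiagonalTuple_zero_succ]
          simp
        · have hlt : n - m < i := by omega
          rw [hU]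
          simp only
          rw [filter_pos_empty hlt, Finset.sum_empty]
  rw [h1, Finset.sum_congr rfl (fun i _ => h3 i), Finset.sum_comm]
  refine Finset.sum_congr rfl fun m hm => ?_
  rw [← Finset.smul_sum, ← Finset.mul_sum, h5 m hm]

theorem explicit_rec {K A : Type*} [Field K] [CharZero K] [Ring A] [Algebra K A]
    (δ : ℕ → Module.End K A) (d : ℕ → Module.End K A)
    (hd0 : d 0 = 1) (hd : ∀ n, 1 ≤ n → d n = explicitHigherTerm δ n) (n : ℕ) :
    (n : K) • d n = ∑ m ∈ Finset.Icc 1 n, δ m * d (n - m) := by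
  rcases Nat.eq_zero_or_pos n with rfl | hn
  · simp
  · have hne : (n : K) ≠ 0 := Nat.cast_ne_zero.2 (by omega)
    rw [hd n hn, explicit_sum_eq δ hn, Finset.smul_sum]
    refine Finset.sum_congr rfl fun m hm => ?_
    rw [smul_smul, mul_inv_cancel₀ hne, one_smul]
    congr 1
    by_cases h : n - m = 0
    · rw [if_pos h, h, hd0]
    · rw [if_neg h, hd (n-m) (Nat.pos_of_ne_zero h)]

/-- Corollary 2.9 (second half): given a sequence `{δₙ}` of derivations, the sequence
defined by `d₀ = I` and the explicit combinatorial formula is a higher derivation. -/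
theorem explicit_formula_gives_higher_derivation
    {K A : Type*} [Field K] [CharZero K] [Ring A] [Algebra K A]
    (δ : ℕ → Module.End K A)
    (hδ : ∀ n, 1 ≤ n → ∀ a b : A, δ n (a * b) = δ n a * b + a * δ n b)
    (d : ℕ → Module.End K A)
    (hd0 : d 0 = 1) (hd : ∀ n, 1 ≤ n → d n = explicitHigherTerm δ n) :
    ∀ (n : ℕ) (a b : A),
      d n (a * b) = ∑ k ∈ Finset.range (n + 1), d (n - k) a * d k b := by

  intro n
  induction n using Nat.strong_induction_on with
  | _ n ih =>
  intro a b
  rcases Nat.eq_zero_or_pos n with rfl | hn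
  · simp [hd0]
  · have hne : (n : K) ≠ 0 := Nat.cast_ne_zero.2 (by omega)
    have hrec := explicit_rec δ d hd0 hd
    have hrecp : ∀ (j : ℕ) (x : A), (j : K) • d j x = ∑ m ∈ Finset.Icc 1 j, δ m (d (j - m) x) := by
      intro j x
      have h := congrArg (fun (g : Module.End K A) => g x) (hrec j)
      simpa only [LinearMap.smul_apply, LinearMap.coe_sum, Finset.sum_apply,
        Module.End.mul_apply] using h
    have key : (n : K) • d n (a * b) = (n : K) • ∑ k ∈ Finset.range (n+1), d (n-k) a * d k b := by
      rw [hrecp n (a*b)]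
      have L1 : ∀ m ∈ Finset.Icc 1 n, δ m (d (n - m) (a*b)) =
          (∑ k ∈ Finset.range (n - m + 1), δ m (d (n-m-k) a) * d k b)
          + ∑ k ∈ Finset.range (n - m + 1), d (n-m-k) a * δ m (d k b) := by
        intro m hm
        simp only [Finset.mem_Icc] at hm
        rw [ih (n - m) (by omega) a b, map_sum, ← Finset.sum_add_distrib]
        refine Finset.sum_congr rfl fun k _ => ?_
        exact hδ m hm.1 _ _
      rw [Finset.sum_congr rfl L1, Finset.sum_add_distrib, Finset.smul_sum]
      have R1 : ∀ k ∈ Finset.range (n+1), (n : K) • (d (n-k) a * d k b)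
          = (∑ m ∈ Finset.Icc 1 (n-k), δ m (d (n-k-m) a) * d k b)
            + ∑ m ∈ Finset.Icc 1 k, d (n-k) a * δ m (d (k-m) b) := by
        intro k hk
        simp only [Finset.mem_range] at hk
        have hcast : ((n - k : ℕ) : K) + (k : K) = (n : K) := by
          rw [← Nat.cast_add]; congr 1; omega
        rw [← hcast, add_smul, ← smul_mul_assoc, ← mul_smul_comm, hrecp (n-k) a, hrecp k b,
          Finset.sum_mul, Finset.mul_sum]
      rw [Finset.sum_congr rfl R1, Finset.sum_add_distrib]
      congr 1
      · rw [Finset.sum_comm' (s := Finset.Icc 1 n) (t := fun m => Finset.range (n - m + 1))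
          (t' := Finset.range (n+1)) (s' := fun k => Finset.Icc 1 (n-k)) (by
            intro m k
            simp only [Finset.mem_Icc, Finset.mem_range]
            omega)]
        refine Finset.sum_congr rfl fun k _ => Finset.sum_congr rfl fun m _ => ?_
        rw [Nat.sub_right_comm]
      · rw [Finset.sum_sigma', Finset.sum_sigma']
        refine Finset.sum_nbij' (i := fun p => ⟨p.1 + p.2, p.1⟩) (j := fun p => ⟨p.2, p.1 - p.2⟩)
          ?_ ?_ ?_ ?_ ?_
        · rintro ⟨m, k⟩ hp
          simp only [Finset.mem_sigma, Finset.mem_Icc, Finset.mem_range] at *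
          omega
        · rintro ⟨k, m⟩ hp
          simp only [Finset.mem_sigma, Finset.mem_Icc, Finset.mem_range] at *
          omega
        · rintro ⟨m, k⟩ hp
          simp only [Finset.mem_sigma, Finset.mem_Icc, Finset.mem_range] at hp
          have h2 : m + k - m = k := by omega
          simp [h2]
        · rintro ⟨k, m⟩ hp
          simp only [Finset.mem_sigma, Finset.mem_Icc, Finset.mem_range] at hp
          have h2 : m + (k - m) = k := by omega
          simp [h2]
        · rintro ⟨m, k⟩ hp
          simp only [Finset.mem_sigma, Finset.mem_Icc, Finset.mem_range] at hp
          have h1 : n - (m + k) = n - m - k := by omega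
          have h2 : m + k - m = k := by omega
          simp only [h1, h2]
    calc d n (a * b) = (n:K)⁻¹ • ((n:K) • d n (a * b)) := by
          rw [smul_smul, inv_mul_cancel₀ hne, one_smul]
    _ = (n:K)⁻¹ • ((n:K) • ∑ k ∈ Finset.range (n+1), d (n-k) a * d k b) := by rw [key]
    _ = ∑ k ∈ Finset.range (n+1), d (n-k) a * d k b := by
          rw [smul_smul, inv_mul_cancel₀ hne, one_smul]
end
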